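/- The function f(x¹,…,x^k) = Σ_{i=1}^m min_{ℓ=1,…,k} ‖x^ℓ − aⁱ‖ + Σ_{ℓ=1}^k ‖x^ℓ − x*‖, where x* = (1/k)Σ_{j=1}^k x^j, is a difference of two convex functions on (ℝⁿ)^k: namely f = g − h with g(x¹,…,x^k) = Σ_i Σ_ℓ ‖x^ℓ − aⁱ‖ + Σ_ℓ ‖x^ℓ − x*‖ and h(x¹,…,x^k) = Σ_i max_{r} Σ_{ℓ≠r} ‖x^ℓ − aⁱ‖, both convex. -/

import Mathlib

set_option maxHeartbeats 1000000

open Finset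

section helpers

variable {E : Type*} [NormedAddCommGroup E] [NormedSpace ℝ E]
variable {ι : Type*}

lemma myConvexOn_sum {β : Type*} (s : Finset β) (f : β → (ι → E) → ℝ)
    (hf : ∀ b ∈ s, ConvexOn ℝ Set.univ (f b)) :
    ConvexOn ℝ Set.univ (fun x => ∑ b ∈ s, f b x) := by
  induction s using Finset.cons_induction with
  | empty => simpa using convexOn_const 0 convex_univ
  | cons b s hb ih =>
    simp only [Finset.sum_cons]
    exact (hf b (Finset.mem_cons_self b s)).add
      (ih fun b hb => hf b (Finset.mem_cons_of_mem hb))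

lemma myConvexOn_norm_linear (L : (ι → E) →ₗ[ℝ] EuclideanSpace ℝ (Fin n)) (c : EuclideanSpace ℝ (Fin n)) :
    ConvexOn ℝ Set.univ (fun x => ‖L x - c‖) := by
  refine ⟨convex_univ, fun x _ y _ s t hs ht hst => ?_⟩
  have key : L (s • x + t • y) - c = s • (L x - c) + t • (L y - c) := by
    have h2 : s • (L x - c) + t • (L y - c) = s • L x + t • L y - (s + t) • c := by
      module
    rw [h2, hst, one_smul, map_add, map_smul, map_smul]
  simp only [smul_eq_mul]
  rw [key]
  calc ‖s • (L x - c) + t • (L y - c)‖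
      ≤ ‖s • (L x - c)‖ + ‖t • (L y - c)‖ := norm_add_le _ _
    _ = s * ‖L x - c‖ + t * ‖L y - c‖ := by
        rw [norm_smul, norm_smul, Real.norm_of_nonneg hs, Real.norm_of_nonneg ht]

lemma my_sub_min (a b c : ℝ) : a - min b c = max (a - b) (a - c) := by
  rcases le_total b c with h | h
  · rw [min_eq_left h, max_eq_left (by linarith)]
  · rw [min_eq_right h, max_eq_right (by linarith)]

lemma my_sup'_sub (s : Finset ι) (hs : s.Nonempty) (c : ℝ) (f : ι → ℝ) :
    s.sup' hs (fun i => c - f i) = c - s.inf' hs f := by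
  induction hs using Finset.Nonempty.cons_induction with
  | singleton i => rw [Finset.sup'_singleton, Finset.inf'_singleton]
  | cons i s hi hs ih => rw [Finset.sup'_cons hs, Finset.inf'_cons hs, ih, my_sub_min]

end helpers

theorem clustering_objective_dc (n m k : ℕ) (hk : 0 < k)
    (a : Fin m → EuclideanSpace ℝ (Fin n)) :
    ConvexOn ℝ Set.univ
      (fun x : Fin k → EuclideanSpace ℝ (Fin n) =>
        (∑ i : Fin m, ∑ ℓ : Fin k, ‖x ℓ - a i‖)
          + ∑ ℓ : Fin k, ‖x ℓ - (k : ℝ)⁻¹ • ∑ j : Fin k, x j‖) ∧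
    ConvexOn ℝ Set.univ
      (fun x : Fin k → EuclideanSpace ℝ (Fin n) =>
        ∑ i : Fin m, ⨆ r : Fin k, ∑ ℓ ∈ univ.erase r, ‖x ℓ - a i‖) ∧
    ∀ x : Fin k → EuclideanSpace ℝ (Fin n),
      (∑ i : Fin m, ⨅ ℓ : Fin k, ‖x ℓ - a i‖)
          + ∑ ℓ : Fin k, ‖x ℓ - (k : ℝ)⁻¹ • ∑ j : Fin k, x j‖
        = ((∑ i : Fin m, ∑ ℓ : Fin k, ‖x ℓ - a i‖)
            + ∑ ℓ : Fin k, ‖x ℓ - (k : ℝ)⁻¹ • ∑ j : Fin k, x j‖)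
          - ∑ i : Fin m, ⨆ r : Fin k, ∑ ℓ ∈ univ.erase r, ‖x ℓ - a i‖ := by
  haveI : Nonempty (Fin k) := ⟨⟨0, hk⟩⟩
  -- linear maps
  have hnorm : ∀ (ℓ : Fin k) (c : EuclideanSpace ℝ (Fin n)),
      ConvexOn ℝ Set.univ (fun x : Fin k → EuclideanSpace ℝ (Fin n) => ‖x ℓ - c‖) := fun ℓ c =>
    myConvexOn_norm_linear (LinearMap.proj ℓ) c
  have hcent : ∀ ℓ : Fin k,
      ConvexOn ℝ Set.univ
        (fun x : Fin k → EuclideanSpace ℝ (Fin n) => ‖x ℓ - (k : ℝ)⁻¹ • ∑ j : Fin k, x j‖) := by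
    intro ℓ
    have := myConvexOn_norm_linear
      ((LinearMap.proj ℓ : (Fin k → EuclideanSpace ℝ (Fin n)) →ₗ[ℝ] EuclideanSpace ℝ (Fin n))
        - (k : ℝ)⁻¹ • (∑ j : Fin k, LinearMap.proj j)) (0 : EuclideanSpace ℝ (Fin n))
    simpa [LinearMap.sub_apply, LinearMap.smul_apply, LinearMap.sum_apply,
      sub_zero] using this
  refine ⟨?_, ?_, ?_⟩
  · have g1 : ConvexOn ℝ Set.univ
        (fun x : Fin k → EuclideanSpace ℝ (Fin n) => ∑ i : Fin m, ∑ ℓ : Fin k, ‖x ℓ - a i‖) :=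
      myConvexOn_sum Finset.univ (fun i x => ∑ ℓ : Fin k, ‖x ℓ - a i‖)
        (fun i _ => myConvexOn_sum Finset.univ (fun ℓ x => ‖x ℓ - a i‖)
          (fun ℓ _ => hnorm ℓ (a i)))
    have g2 : ConvexOn ℝ Set.univ
        (fun x : Fin k → EuclideanSpace ℝ (Fin n) =>
          ∑ ℓ : Fin k, ‖x ℓ - (k : ℝ)⁻¹ • ∑ j : Fin k, x j‖) :=
      myConvexOn_sum Finset.univ
        (fun ℓ x => ‖x ℓ - (k : ℝ)⁻¹ • ∑ j : Fin k, x j‖) (fun ℓ _ => hcent ℓ)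
    exact g1.add g2
  · refine myConvexOn_sum Finset.univ
      (fun i x => ⨆ r : Fin k, ∑ ℓ ∈ univ.erase r, ‖x ℓ - a i‖) (fun i _ => ?_)
    have : ∀ x : Fin k → EuclideanSpace ℝ (Fin n),
        (⨆ r : Fin k, ∑ ℓ ∈ univ.erase r, ‖x ℓ - a i‖)
          = Finset.univ.sup' Finset.univ_nonempty
              (fun r => ∑ ℓ ∈ univ.erase r, ‖x ℓ - a i‖) := fun x =>
      (Finset.sup'_univ_eq_ciSup _).symm
    simp only [this]
    -- convexity of sup' over nonempty finset
    have : ∀ (s : Finset (Fin k)) (hs : s.Nonempty),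
        ConvexOn ℝ Set.univ (fun x : Fin k → EuclideanSpace ℝ (Fin n) =>
          s.sup' hs (fun r => ∑ ℓ ∈ univ.erase r, ‖x ℓ - a i‖)) := by
      intro s hs
      induction hs using Finset.Nonempty.cons_induction with
      | singleton r =>
        simpa using myConvexOn_sum (univ.erase r) _ (fun ℓ _ => hnorm ℓ (a i))
      | cons r s hr hs ih =>
        have hrw : (fun x : Fin k → EuclideanSpace ℝ (Fin n) =>
            (Finset.cons r s hr).sup' (Finset.cons_nonempty hr)
              (fun r' => ∑ ℓ ∈ univ.erase r', ‖x ℓ - a i‖))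
            = (fun x => (∑ ℓ ∈ univ.erase r, ‖x ℓ - a i‖)
                ⊔ s.sup' hs (fun r' => ∑ ℓ ∈ univ.erase r', ‖x ℓ - a i‖)) :=
          funext fun x => Finset.sup'_cons hs _
        rw [hrw]
        have h1 := myConvexOn_sum (univ.erase r) (fun ℓ x => ‖x ℓ - a i‖)
          (fun ℓ _ => hnorm ℓ (a i))
        exact h1.sup ih
    exact this _ _
  · intro x
    have key : ∀ i : Fin m,
        (⨅ ℓ : Fin k, ‖x ℓ - a i‖)
          + (⨆ r : Fin k, ∑ ℓ ∈ univ.erase r, ‖x ℓ - a i‖)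
          = ∑ ℓ : Fin k, ‖x ℓ - a i‖ := by
      intro i
      rw [← Finset.sup'_univ_eq_ciSup, ← Finset.inf'_univ_eq_ciInf]
      have herase : ∀ r : Fin k,
          ∑ ℓ ∈ univ.erase r, ‖x ℓ - a i‖
            = (∑ ℓ : Fin k, ‖x ℓ - a i‖) - ‖x r - a i‖ := fun r =>
        (Finset.sum_erase_eq_sub (Finset.mem_univ r))
      simp only [herase]
      rw [my_sup'_sub]
      ring
    have : ∑ i : Fin m, ((⨅ ℓ : Fin k, ‖x ℓ - a i‖)
        + (⨆ r : Fin k, ∑ ℓ ∈ univ.erase r, ‖x ℓ - a i‖))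
        = ∑ i : Fin m, ∑ ℓ : Fin k, ‖x ℓ - a i‖ := by
      exact Finset.sum_congr rfl fun i _ => key i
    rw [Finset.sum_add_distrib] at this
    linarith
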